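/- For all z ≥ 0, (1-Φ(z))(2Φ(z)-1)/φ(z) ≤ 1/2, where φ and Φ are the standard normal density and distribution function. -/

import Mathlib

open MeasureTheory Real

/-- Standard normal density. -/
noncomputable def stdPhi (x : ℝ) : ℝ := Real.exp (-x^2/2) / Real.sqrt (2*Real.pi)

/-- Standard normal distribution function. -/
noncomputable def stdCDF (x : ℝ) : ℝ := ∫ t in Set.Iic x, stdPhi t

noncomputable def Qf (z : ℝ) : ℝ := ∫ t in Set.Ioi z, stdPhi t

lemma stdPhi_eq (x : ℝ) : stdPhi x = Real.exp (-(1/2) * x^2) / Real.sqrt (2*Real.pi) := by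
  rw [stdPhi]; ring_nf

lemma stdPhi_pos (x : ℝ) : 0 < stdPhi x := by
  apply div_pos (Real.exp_pos _)
  exact Real.sqrt_pos.2 (by positivity)

lemma stdPhi_cont : Continuous stdPhi := by
  unfold stdPhi
  fun_prop

lemma stdPhi_integrable : Integrable stdPhi := by
  have h : Integrable (fun x : ℝ => Real.exp (-(1/2) * x^2)) :=
    integrable_exp_neg_mul_sq (by norm_num)
  have := h.div_const (Real.sqrt (2*Real.pi))
  apply this.congr
  filter_upwards with x
  rw [stdPhi_eq]

lemma stdPhi_integral : ∫ x, stdPhi x = 1 := by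
  have h : ∫ x : ℝ, Real.exp (-(1/2) * x^2) = Real.sqrt (Real.pi / (1/2)) :=
    integral_gaussian (1/2)
  have h2 : ∫ x, stdPhi x = (∫ x : ℝ, Real.exp (-(1/2) * x^2)) / Real.sqrt (2*Real.pi) := by
    rw [← integral_div]
    congr 1; funext x; rw [stdPhi_eq]
  rw [h2, h]
  rw [show Real.pi / (1/2) = 2 * Real.pi by ring]
  rw [div_self]
  positivity

lemma Qf_eq (z : ℝ) : Qf z = 1 - stdCDF z := by
  have := intervalIntegral.integral_Iic_add_Ioi (b := z) stdPhi_integrable.integrableOn stdPhi_integrable.integrableOn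
  rw [stdPhi_integral] at this
  rw [Qf, stdCDF]; linarith

lemma Qf_nonneg (z : ℝ) : 0 ≤ Qf z :=
  integral_nonneg fun x => (stdPhi_pos x).le

lemma hasDerivAt_stdCDF (z : ℝ) : HasDerivAt stdCDF (stdPhi z) z := by
  have h1 : ∀ x, stdCDF x = stdCDF 0 + ∫ t in (0:ℝ)..x, stdPhi t := by
    intro x
    have := intervalIntegral.integral_Iic_sub_Iic (f := stdPhi) (μ := volume) (a := (0:ℝ)) (b := x)
      stdPhi_integrable.integrableOn stdPhi_integrable.integrableOn
    rw [stdCDF, stdCDF]; linarith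
  have h2 : HasDerivAt (fun x => stdCDF 0 + ∫ t in (0:ℝ)..x, stdPhi t) (stdPhi z) z :=
    ((stdPhi_cont.integral_hasStrictDerivAt 0 z).hasDerivAt).const_add _
  exact h2.congr_deriv rfl |>.congr_of_eventuallyEq (by filter_upwards with x; rw [h1])

lemma hasDerivAt_Qf (z : ℝ) : HasDerivAt Qf (-(stdPhi z)) z := by
  have h := (hasDerivAt_stdCDF z).const_sub 1
  exact h.congr_of_eventuallyEq (by filter_upwards with x; rw [Qf_eq])

lemma Qf_tendsto : Filter.Tendsto Qf Filter.atTop (nhds 0) := by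
  have h1 : Filter.Tendsto (fun z => ∫ t in (0:ℝ)..z, stdPhi t) Filter.atTop (nhds (Qf 0)) :=
    intervalIntegral_tendsto_integral_Ioi 0 stdPhi_integrable.integrableOn Filter.tendsto_id
  have h2 : ∀ z, Qf z = Qf 0 - ∫ t in (0:ℝ)..z, stdPhi t := by
    intro z
    have := intervalIntegral.integral_Iic_sub_Iic (f := stdPhi) (μ := volume) (a := (0:ℝ)) (b := z)
      stdPhi_integrable.integrableOn stdPhi_integrable.integrableOn
    rw [Qf_eq, Qf_eq, stdCDF, stdCDF]; linarith
  have : Filter.Tendsto (fun z => Qf 0 - ∫ t in (0:ℝ)..z, stdPhi t) Filter.atTop (nhds (Qf 0 - Qf 0)) :=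
    Filter.Tendsto.sub tendsto_const_nhds h1
  simpa [← h2] using this

lemma stdPhi_tendsto : Filter.Tendsto stdPhi Filter.atTop (nhds 0) := by
  have h : Filter.Tendsto (fun x : ℝ => -x^2/2) Filter.atTop Filter.atBot := by
    apply Filter.Tendsto.atBot_div_const (by norm_num)
    exact Filter.tendsto_neg_atBot_iff.2 (Filter.tendsto_pow_atTop (n := 2) (by norm_num))
  have h2 := (Real.tendsto_exp_atBot.comp h).div_const (Real.sqrt (2*Real.pi))
  have : (fun x : ℝ => Real.exp (-x^2/2) / Real.sqrt (2*Real.pi)) = stdPhi := rfl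
  simpa only [Function.comp_def, zero_div, this] using h2

lemma hasDerivAt_stdPhi (z : ℝ) : HasDerivAt stdPhi (-z * stdPhi z) z := by
  have h1 : HasDerivAt (fun x : ℝ => -x^2/2) (-z) z := by
    have := ((hasDerivAt_pow 2 z).neg).div_const 2
    simpa using this.congr_deriv (by push_cast; ring)
  have h2 := (h1.exp).div_const (Real.sqrt (2*Real.pi))
  exact h2.congr_deriv (by rw [stdPhi]; ring)

lemma nonneg_of_deriv_nonpos_tendsto {f g : ℝ → ℝ} {a : ℝ}
    (hd : ∀ x ∈ Set.Ici a, HasDerivAt f (g x) x)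
    (hg : ∀ x ∈ Set.Ioi a, g x ≤ 0)
    (hlim : Filter.Tendsto f Filter.atTop (nhds 0)) :
    ∀ z ∈ Set.Ici a, 0 ≤ f z := by
  have hanti : AntitoneOn f (Set.Ici a) := by
    apply antitoneOn_of_deriv_nonpos (convex_Ici a)
    · intro x hx; exact (hd x hx).continuousAt.continuousWithinAt
    · intro x hx
      rw [interior_Ici] at hx
      exact (hd x (Set.mem_Ici.2 (le_of_lt hx))).differentiableAt.differentiableWithinAt
    · intro x hx
      rw [interior_Ici] at hx
      rw [(hd x (Set.mem_Ici.2 hx.le)).deriv]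
      exact hg x hx
  intro z hz
  apply le_of_tendsto hlim
  filter_upwards [Filter.eventually_ge_atTop z] with y hy
  exact hanti hz (le_trans hz hy) hy

lemma sqrt_key (z : ℝ) : HasDerivAt (fun x : ℝ => Real.sqrt (x^2+4)) (z / Real.sqrt (z^2+4)) z := by
  have hinner : HasDerivAt (fun x : ℝ => x^2+4) (2*z) z := by
    simpa using ((hasDerivAt_pow 2 z).add_const 4)
  have hpos : (0:ℝ) < z^2+4 := by positivity
  have := (Real.hasDerivAt_sqrt (ne_of_gt hpos)).comp z hinner
  apply this.congr_deriv
  have hs : Real.sqrt (z^2+4) ≠ 0 := by positivity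
  field_simp

/-- Birnbaum lower bound for the Gaussian tail. -/
lemma birnbaum : ∀ z ∈ Set.Ici (0:ℝ),
    0 ≤ Qf z - stdPhi z * ((Real.sqrt (z^2+4) - z)/2) := by
  set u : ℝ → ℝ := fun z => stdPhi z * ((Real.sqrt (z^2+4) - z)/2) with hu
  have hderivu : ∀ z : ℝ, HasDerivAt u
      ((-z * stdPhi z) * ((Real.sqrt (z^2+4) - z)/2)
        + stdPhi z * ((z / Real.sqrt (z^2+4) - 1)/2)) z := by
    intro z
    exact (hasDerivAt_stdPhi z).mul (((sqrt_key z).sub (hasDerivAt_id z)).div_const 2)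
  apply nonneg_of_deriv_nonpos_tendsto
    (g := fun z => -(stdPhi z) - ((-z * stdPhi z) * ((Real.sqrt (z^2+4) - z)/2)
        + stdPhi z * ((z / Real.sqrt (z^2+4) - 1)/2)))
  · intro x _
    exact (hasDerivAt_Qf x).sub (hderivu x)
  · intro z hz
    have hz0 : (0:ℝ) < z := hz
    set S := Real.sqrt (z^2+4) with hS
    have hS2 : S^2 = z^2+4 := Real.sq_sqrt (by positivity)
    have hSpos : (0:ℝ) < S := Real.sqrt_pos.2 (by positivity)
    have hc := stdPhi_pos z
    have hkey : z*(z^2+3) ≤ S*(z^2+1) := by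
      have h4 : (S*(z^2+1))^2 = (z*(z^2+3))^2 + 4 := by
        rw [mul_pow, hS2]; ring
      have h5 : (S*(z^2+1) - z*(z^2+3)) * (S*(z^2+1) + z*(z^2+3)) = 4 := by
        linear_combination h4
      nlinarith [h5, hSpos, hz0, sq_nonneg z, mul_pos hSpos (show (0:ℝ) < z^2+1 by positivity),
        mul_pos hz0 (show (0:ℝ) < z^2+3 by positivity)]
    have hzS : z / S = z * S / (z^2+4) := by
      rw [div_eq_div_iff hSpos.ne' (by positivity)]
      linear_combination (-z) * hS2
    rw [hzS]
    have h6 : S*(z*(z^2+3)) ≤ S*(S*(z^2+1)) := mul_le_mul_of_nonneg_left hkey hSpos.le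
    have h7 : z * S * (z^2+3) ≤ (z^2+1)*(z^2+4) := by nlinarith [h6, hS2]
    have hE : -(stdPhi z) - ((-z * stdPhi z) * ((S - z)/2)
        + stdPhi z * ((z * S / (z^2+4) - 1)/2))
        = stdPhi z * ((z*S*(z^2+3) - (z^2+1)*(z^2+4)) / (2*(z^2+4))) := by
      field_simp
      ring
    rw [hE]
    apply mul_nonpos_of_nonneg_of_nonpos hc.le
    apply div_nonpos_of_nonpos_of_nonneg _ (by positivity)
    linarith
  · -- tendsto 0
    have hub : ∀ᶠ z in Filter.atTop, u z ≤ stdPhi z := by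
      filter_upwards [Filter.eventually_ge_atTop (0:ℝ)] with z hz
      rw [hu]
      have hS2 : (Real.sqrt (z^2+4))^2 = z^2+4 := Real.sq_sqrt (by positivity)
      have hle : Real.sqrt (z^2+4) ≤ z + 2 := by
        rw [show z^2+4 = (z+2)^2 - 4*z by ring]
        calc Real.sqrt ((z+2)^2 - 4*z) ≤ Real.sqrt ((z+2)^2) := by
              apply Real.sqrt_le_sqrt; nlinarith
          _ = z + 2 := Real.sqrt_sq (by linarith)
      nlinarith [stdPhi_pos z]
    have hlb : ∀ᶠ z in Filter.atTop, (0:ℝ) ≤ u z := by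
      filter_upwards [Filter.eventually_ge_atTop (0:ℝ)] with z hz
      rw [hu]
      apply mul_nonneg (stdPhi_pos z).le
      have : z ≤ Real.sqrt (z^2+4) := by
        rw [show z = Real.sqrt (z^2) by rw [Real.sqrt_sq hz]]
        apply Real.sqrt_le_sqrt
        · nlinarith [Real.sq_sqrt (show (0:ℝ) ≤ z^2 by positivity), Real.sqrt_sq hz]
      linarith
    have hulim : Filter.Tendsto u Filter.atTop (nhds 0) :=
      tendsto_of_tendsto_of_tendsto_of_le_of_le' tendsto_const_nhds stdPhi_tendsto hlb hub
    simpa using Qf_tendsto.sub hulim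

lemma exp_nine_quarters_lt : Real.exp (9/4) < 9.49 := by
  have h9 : Real.exp 9 < 2.7182818286^9 := by
    have he : Real.exp 9 = Real.exp 1 ^ 9 := by
      rw [← Real.exp_nat_mul]; norm_num
    rw [he]
    exact pow_lt_pow_left₀ Real.exp_one_lt_d9 (Real.exp_pos 1).le (by norm_num)
  have h4 : (Real.exp (9/4))^4 = Real.exp 9 := by
    rw [← Real.exp_nat_mul]; norm_num
  by_contra hcon
  push_neg at hcon
  have h49 : (9.49:ℝ)^4 ≤ (Real.exp (9/4))^4 := pow_le_pow_left₀ (by norm_num) hcon 4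
  rw [h4] at h49
  have : (2.7182818286:ℝ)^9 < 9.49^4 := by norm_num
  linarith

lemma log_L_ge : (9:ℝ)/4 ≤ Real.log (32/Real.pi) := by
  have h1 : Real.exp (9/4) ≤ 32/Real.pi := by
    have hpi : Real.pi < 3.1416 := by
      have := Real.pi_lt_d2
      linarith [Real.pi_lt_d6]
    have : Real.pi * 9.49 < 32 := by nlinarith [Real.pi_gt_three]
    rw [le_div_iff₀ Real.pi_pos]
    nlinarith [exp_nine_quarters_lt, Real.pi_pos]
  calc (9:ℝ)/4 = Real.log (Real.exp (9/4)) := (Real.log_exp _).symm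
    _ ≤ Real.log (32/Real.pi) := Real.log_le_log (Real.exp_pos _) h1

lemma log_L_le : Real.log (32/Real.pi) ≤ 4 := by
  have h1 : (32:ℝ)/Real.pi ≤ Real.exp 4 := by
    have he : (2.7:ℝ) < Real.exp 1 := by
      have := Real.exp_one_gt_d9
      linarith
    have h4 : (2.7:ℝ)^4 < Real.exp 4 := by
      have he4 : Real.exp 4 = Real.exp 1 ^ 4 := by
        rw [← Real.exp_nat_mul]; norm_num
      rw [he4]
      exact pow_lt_pow_left₀ he (by norm_num) (by norm_num)
    have : (32:ℝ)/Real.pi ≤ 32/3 := by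
      apply div_le_div_of_nonneg_left (by norm_num) (by norm_num) Real.pi_gt_three.le
    nlinarith
  calc Real.log (32/Real.pi) ≤ Real.log (Real.exp 4) :=
        Real.log_le_log (by positivity) h1
    _ = 4 := Real.log_exp 4

lemma stdPhi_ge_iff (z : ℝ) : 1/8 ≤ stdPhi z ↔ z^2 ≤ Real.log (32/Real.pi) := by
  have h2π : (0:ℝ) < 2*Real.pi := by positivity
  have hsq : (Real.sqrt (2*Real.pi))^2 = 2*Real.pi := Real.sq_sqrt h2π.le
  have hspos : 0 < Real.sqrt (2*Real.pi) := Real.sqrt_pos.2 h2π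
  rw [stdPhi, le_div_iff₀ hspos]
  have hpos : (0:ℝ) < 1/8 * Real.sqrt (2*Real.pi) := by positivity
  rw [← Real.exp_log hpos, Real.exp_le_exp]
  constructor
  · intro h
    have key : Real.log (1/8 * Real.sqrt (2*Real.pi)) = -(Real.log (32/Real.pi))/2 := by
      have hprod : (1/8 * Real.sqrt (2*Real.pi))^2 * (32/Real.pi) = 1 := by
        rw [mul_pow, hsq]; field_simp; ring
      have hlog : Real.log ((1/8 * Real.sqrt (2*Real.pi))^2) + Real.log (32/Real.pi) = 0 := by
        rw [← Real.log_mul (by positivity) (by positivity), hprod, Real.log_one]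
      rw [Real.log_pow] at hlog
      push_cast at hlog
      linarith
    rw [key] at h
    linarith
  · intro h
    have key : Real.log (1/8 * Real.sqrt (2*Real.pi)) = -(Real.log (32/Real.pi))/2 := by
      have hprod : (1/8 * Real.sqrt (2*Real.pi))^2 * (32/Real.pi) = 1 := by
        rw [mul_pow, hsq]; field_simp; ring
      have hlog : Real.log ((1/8 * Real.sqrt (2*Real.pi))^2) + Real.log (32/Real.pi) = 0 := by
        rw [← Real.log_mul (by positivity) (by positivity), hprod, Real.log_one]
      rw [Real.log_pow] at hlog
      push_cast at hlog
      linarith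
    rw [key]
    linarith

lemma hasDerivAt_D (z : ℝ) :
    HasDerivAt (fun x => Qf x - (2-x)/8) (-(stdPhi z) + 1/8) z := by
  have h2 : HasDerivAt (fun x : ℝ => (2-x)/8) (-1/8) z := by
    have := ((hasDerivAt_id z).const_sub 2).div_const 8
    exact this.congr_deriv (by norm_num)
  exact ((hasDerivAt_Qf z).sub h2).congr_deriv (by ring)

lemma Qf_lower {z : ℝ} (h0 : 0 ≤ z) : (2-z)/8 ≤ Qf z := by
  rcases le_or_gt 2 z with h2 | h2
  · have := Qf_nonneg z
    linarith
  set L := Real.log (32/Real.pi) with hL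
  have hL94 : 9/4 ≤ L := log_L_ge
  have hL4 : L ≤ 4 := log_L_le
  set zs := Real.sqrt L with hzs
  have hzs0 : 0 ≤ zs := Real.sqrt_nonneg _
  have hzs2 : zs^2 = L := Real.sq_sqrt (by linarith)
  have hzs32 : 3/2 ≤ zs := by nlinarith
  have hzsle2 : zs ≤ 2 := by nlinarith
  -- value at zs
  have hDzs : (2-zs)/8 ≤ Qf zs := by
    have hb := birnbaum zs hzs0
    set T := Real.sqrt (zs^2+4) with hT
    have hT2 : T^2 = zs^2+4 := Real.sq_sqrt (by positivity)
    have hT0 : 0 ≤ T := Real.sqrt_nonneg _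
    have hTzs : zs ≤ T := by nlinarith
    have hTge : 4 - zs ≤ T := by
      have h5 : (T - (4-zs))*(T + (4-zs)) = 8*zs - 12 := by
        linear_combination hT2
      nlinarith [h5]
    have hphi : 1/8 ≤ stdPhi zs := (stdPhi_ge_iff zs).2 (by rw [hzs2])
    have hv : 0 ≤ (T - zs)/2 := by linarith
    have : (1/8) * ((T - zs)/2) ≤ stdPhi zs * ((T - zs)/2) :=
      mul_le_mul_of_nonneg_right hphi hv
    nlinarith
  rcases le_or_gt z zs with hcase | hcase
  · -- antitone on [0, zs]
    have hanti : AntitoneOn (fun x => Qf x - (2-x)/8) (Set.Icc 0 zs) := by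
      apply antitoneOn_of_deriv_nonpos (convex_Icc 0 zs)
      · intro x hx; exact (hasDerivAt_D x).continuousAt.continuousWithinAt
      · intro x hx; exact (hasDerivAt_D x).differentiableAt.differentiableWithinAt
      · intro x hx
        rw [interior_Icc] at hx
        rw [(hasDerivAt_D x).deriv]
        have : 1/8 ≤ stdPhi x := by
          apply (stdPhi_ge_iff x).2
          have : x^2 ≤ zs^2 := by nlinarith [hx.1.le, hx.2.le]
          linarith [hzs2 ▸ this]
        linarith
    have := hanti ⟨h0, hcase⟩ ⟨hzs0, le_refl zs⟩ hcase
    simp only at this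
    linarith
  · -- monotone on [zs, 2]
    have hmono : MonotoneOn (fun x => Qf x - (2-x)/8) (Set.Icc zs 2) := by
      apply monotoneOn_of_deriv_nonneg (convex_Icc zs 2)
      · intro x hx; exact (hasDerivAt_D x).continuousAt.continuousWithinAt
      · intro x hx; exact (hasDerivAt_D x).differentiableAt.differentiableWithinAt
      · intro x hx
        rw [interior_Icc] at hx
        rw [(hasDerivAt_D x).deriv]
        have hphile : stdPhi x ≤ 1/8 := by
          by_contra hcon
          push_neg at hcon
          have := (stdPhi_ge_iff x).1 hcon.le
          have hx2 : zs^2 < x^2 := by nlinarith [hx.1, hzs0]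
          rw [hzs2] at hx2
          linarith
        linarith
    have := hmono ⟨le_refl zs, hzsle2⟩ ⟨hcase.le, h2.le⟩ hcase.le
    simp only at this
    linarith

lemma h_nonneg : ∀ z ∈ Set.Ici (0:ℝ), 0 ≤ stdPhi z / 2 - Qf z * (1 - 2 * Qf z) := by
  apply nonneg_of_deriv_nonpos_tendsto
    (g := fun z => (-z * stdPhi z)/2 - ((-(stdPhi z)) * (1 - 2 * Qf z) + Qf z * (-(2 * -(stdPhi z)))))
  · intro x _
    have h1 : HasDerivAt (fun z => 1 - 2 * Qf z) (-(2 * -(stdPhi x))) x :=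
      ((hasDerivAt_Qf x).const_mul 2).const_sub 1
    exact ((hasDerivAt_stdPhi x).div_const 2).sub ((hasDerivAt_Qf x).mul h1)
  · intro z hz
    have hz0 : (0:ℝ) < z := hz
    have hQ := Qf_lower hz0.le
    have hφ := stdPhi_pos z
    have hfact : (-z * stdPhi z)/2 - ((-(stdPhi z)) * (1 - 2 * Qf z) + Qf z * (-(2 * -(stdPhi z))))
        = stdPhi z * (1 - z/2 - 4 * Qf z) := by ring
    rw [hfact]
    apply mul_nonpos_of_nonneg_of_nonpos hφ.le
    linarith
  · have hlim : Filter.Tendsto (fun z => stdPhi z / 2 - Qf z * (1 - 2 * Qf z))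
        Filter.atTop (nhds (0/2 - 0 * (1 - 2*0))) :=
      (stdPhi_tendsto.div_const 2).sub
        (Qf_tendsto.mul (tendsto_const_nhds.sub (Qf_tendsto.const_mul 2)))
    simpa using hlim

theorem stmt13 (z : ℝ) (hz : 0 ≤ z) :
    (1 - stdCDF z) * (2*stdCDF z - 1) / stdPhi z ≤ 1/2 := by
  have hQ : 1 - stdCDF z = Qf z := (Qf_eq z).symm
  have h2 : 2*stdCDF z - 1 = 1 - 2 * Qf z := by rw [Qf_eq]; ring
  rw [hQ, h2, div_le_iff₀ (stdPhi_pos z)]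
  have := h_nonneg z hz
  linarith
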